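/- Let $R$ be a finite commutative local ring with identity, and $G$ a finite abelian group of order $n$ and exponent $m$. Then $R[G]$ is isomorphic as a ring to the product ring $R^n$ (with pointwise operations) if and only if $R$ contains a primitive $m$-th root of unity and $m$ is a unit in $R$. -/

import Mathlib

set_option linter.unusedSectionVars false


section Aux
variable {R : Type*} [CommRing R] [IsLocalRing R]

private lemma one_add_pow_eq (x : R) (d : ℕ) :
    ∃ c : R, (1 + x) ^ d = 1 + d * x + x ^ 2 * c := by
  induction d with
  | zero => exact ⟨0, by simp⟩
  | succ d ih =>
    obtain ⟨c, hc⟩ := ih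
    refine ⟨(d : R) + c + c * x, ?_⟩
    rw [pow_succ, hc]
    push_cast
    ring

private lemma sub_one_isUnit {y : R} {d : ℕ} (hy : y ≠ 1) (h1 : y ^ d = 1)
    (hd : IsUnit (d : R)) : IsUnit (y - 1) := by
  obtain ⟨c, hc⟩ := one_add_pow_eq (y - 1) d
  rw [add_sub_cancel] at hc
  have h2 : (y - 1) * ((d : R) + (y - 1) * c) = 0 := by
    linear_combination h1 - hc
  by_contra hne
  have hmem : y - 1 ∈ IsLocalRing.maximalIdeal R := hne
  have hu : IsUnit ((d : R) + (y - 1) * c) := by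
    by_contra hnu
    have : ((d : R) + (y - 1) * c) ∈ IsLocalRing.maximalIdeal R := hnu
    have hdm : (d : R) ∈ IsLocalRing.maximalIdeal R := by
      have := Ideal.sub_mem _ this (Ideal.mul_mem_right c _ hmem)
      simpa using this
    exact (IsLocalRing.maximalIdeal.isMaximal R).ne_top
      (Ideal.eq_top_of_isUnit_mem _ hdm hd)
  have : y - 1 = 0 := by rwa [hu.mul_left_eq_zero] at h2
  exact hy (by rwa [sub_eq_zero] at this)


private lemma orth {d : ℕ} [NeZero d] {ζ : R} (hζ : orderOf ζ = d)
    (hdu : IsUnit (d : R)) {a : ZMod d} (ha : a ≠ 0) :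
    ∑ b : ZMod d, ζ ^ (a * b).val = 0 := by
  have hmod : ∀ t : ℕ, ζ ^ (t % d) = ζ ^ t := by
    intro t; rw [← hζ, pow_mod_orderOf]
  have hstep : ∀ b : ZMod d, ζ ^ (a * (b + 1)).val = ζ ^ a.val * ζ ^ (a * b).val := by
    intro b
    rw [mul_add, mul_one, ZMod.val_add, hmod, pow_add, mul_comm]
  have hS : (∑ b : ZMod d, ζ ^ (a * b).val) =
      ζ ^ a.val * ∑ b : ZMod d, ζ ^ (a * b).val := by
    rw [Finset.mul_sum]
    calc (∑ b : ZMod d, ζ ^ (a * b).val)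
        = ∑ b : ZMod d, ζ ^ (a * (b + 1)).val :=
          Fintype.sum_equiv (Equiv.subRight (1 : ZMod d)) _ _ (fun b => by simp)
      _ = ∑ b : ZMod d, ζ ^ a.val * ζ ^ (a * b).val := by
          exact Finset.sum_congr rfl fun b _ => hstep b
  have h0 : (ζ ^ a.val - 1) * ∑ b : ZMod d, ζ ^ (a * b).val = 0 := by
    linear_combination -hS
  have hy : ζ ^ a.val ≠ 1 := by
    intro h
    have hdvd : d ∣ a.val := by
      have := orderOf_dvd_of_pow_eq_one h; rwa [hζ] at this
    have hpos : 0 < a.val := Nat.pos_of_ne_zero (fun h0 => ha ((ZMod.val_eq_zero a).mp h0))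
    exact absurd (Nat.le_of_dvd hpos hdvd) (not_le.mpr (ZMod.val_lt a))
  have hζd : ζ ^ d = 1 := by rw [← hζ]; exact pow_orderOf_eq_one ζ
  have hyd : (ζ ^ a.val) ^ d = 1 := by
    rw [← pow_mul, mul_comm, pow_mul, hζd, one_pow]
  have hu := sub_one_isUnit hy hyd hdu
  rwa [hu.mul_right_eq_zero] at h0

end Aux


private lemma backward_aux (R : Type*) [CommRing R] [IsLocalRing R] [Fintype R]
    (ι : Type) [Fintype ι] (n : ι → ℕ) (hn : ∀ i, 0 < n i)
    (ζ : ι → R) (hζ : ∀ i, orderOf (ζ i) = n i) (hu : ∀ i, IsUnit ((n i : ℕ) : R)) :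
    Nonempty (MonoidAlgebra R (∀ i, Multiplicative (ZMod (n i))) ≃+*
      ((∀ i, Multiplicative (ZMod (n i))) → R)) := by
  classical
  haveI : ∀ i, NeZero (n i) := fun i => ⟨(hn i).ne'⟩
  set P := ∀ i, Multiplicative (ZMod (n i)) with hP
  -- the pairing
  set χ : P → P → R := fun x y =>
    ∏ i, ζ i ^ (Multiplicative.toAdd (x i) * Multiplicative.toAdd (y i)).val with hχ
  have hmod : ∀ i (t : ℕ), ζ i ^ (t % n i) = ζ i ^ t := by
    intro i t; rw [← hζ i, pow_mod_orderOf]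
  have hcomp : ∀ i (a b : ZMod (n i)), ζ i ^ (a + b).val = ζ i ^ a.val * ζ i ^ b.val := by
    intro i a b; rw [ZMod.val_add, hmod, pow_add]
  have hχ_mul : ∀ (y x x' : P), χ (x * x') y = χ x y * χ x' y := by
    intro y x x'
    rw [hχ, ← Finset.prod_mul_distrib]
    refine Finset.prod_congr rfl fun i _ => ?_
    have : Multiplicative.toAdd ((x * x') i) =
        Multiplicative.toAdd (x i) + Multiplicative.toAdd (x' i) := rfl
    rw [this, add_mul]
    exact hcomp i _ _
  have hχ_one : ∀ y : P, χ 1 y = 1 := by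
    intro y
    rw [hχ]
    refine Finset.prod_eq_one fun i _ => ?_
    have : Multiplicative.toAdd ((1 : P) i) = (0 : ZMod (n i)) := rfl
    rw [this, zero_mul, ZMod.val_zero, pow_zero]
  -- characters as monoid homs
  set ch : P → (P →* R) := fun y =>
    { toFun := fun x => χ x y
      map_one' := hχ_one y
      map_mul' := fun x x' => hχ_mul y x x' } with hch
  set Φ : MonoidAlgebra R P →+* (P → R) :=
    Pi.ringHom (fun y => ((MonoidAlgebra.lift R R P) (ch y) : MonoidAlgebra R P →ₐ[R] R)) with hΦ
  have hΦ_apply : ∀ (f : MonoidAlgebra R P) (y : P), Φ f y = ∑ x : P, f.coeff x * χ x y := by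
    intro f y
    show (MonoidAlgebra.lift R R P) (ch y) f = _
    rw [MonoidAlgebra.lift_apply, Finsupp.sum_fintype]
    · exact Finset.sum_congr rfl fun x _ => by rw [smul_eq_mul]; rfl
    · intro x; rw [zero_smul]
  -- orthogonality
  have hsum_one : ∀ z : P, z = 1 → ∑ y : P, χ z y = (Fintype.card P : R) := by
    intro z hz
    subst hz
    calc ∑ y : P, χ 1 y = ∑ _y : P, (1 : R) :=
          Finset.sum_congr rfl fun y _ => hχ_one y
      _ = (Fintype.card P : R) := by
          rw [Finset.sum_const, Fintype.card, nsmul_eq_mul, mul_one]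
  have hsum_ne : ∀ z : P, z ≠ 1 → ∑ y : P, χ z y = 0 := by
    intro z hz
    obtain ⟨i0, hi0⟩ := Function.ne_iff.mp hz
    have step1 : ∑ y : P, χ z y =
        ∑ b : ∀ i, ZMod (n i), ∏ i, ζ i ^ (Multiplicative.toAdd (z i) * b i).val := by
      exact Fintype.sum_equiv (Equiv.piCongrRight fun i =>
        (Multiplicative.toAdd : Multiplicative (ZMod (n i)) ≃ ZMod (n i))) _ _ (fun y => rfl)
    have key := Finset.prod_univ_sum (fun i => (Finset.univ : Finset (ZMod (n i))))
      (fun i c => ζ i ^ (Multiplicative.toAdd (z i) * c).val)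
    rw [Fintype.piFinset_univ] at key
    rw [step1, ← key]
    refine Finset.prod_eq_zero (Finset.mem_univ i0) ?_
    refine orth (hζ i0) (hu i0) ?_
    intro h0
    exact hi0 (by
      have : Multiplicative.toAdd (z i0) = Multiplicative.toAdd ((1 : P) i0) := h0
      exact (Multiplicative.toAdd).injective this)
  -- the cardinality is a unit
  have hcardu : IsUnit ((Fintype.card P : ℕ) : R) := by
    have hcard : Fintype.card P = ∏ i, n i := by
      rw [Fintype.card_pi]
      exact Finset.prod_congr rfl fun i _ => by
        rw [Fintype.card_multiplicative, ZMod.card]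
    rw [hcard, Nat.cast_prod]
    refine Finset.prod_induction _ IsUnit (fun a b => IsUnit.mul) isUnit_one ?_
    intro i _
    exact hu i
  -- injectivity
  have hinj : Function.Injective Φ := by
    rw [injective_iff_map_eq_zero]
    intro f hf
    ext g
    have h1 : ∑ y : P, Φ f y * χ g⁻¹ y = f.coeff g * (Fintype.card P : R) := by
      calc ∑ y : P, Φ f y * χ g⁻¹ y
          = ∑ y : P, ∑ x : P, f.coeff x * (χ x y * χ g⁻¹ y) := by
            refine Finset.sum_congr rfl fun y _ => ?_
            rw [hΦ_apply, Finset.sum_mul]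
            exact Finset.sum_congr rfl fun x _ => by ring
        _ = ∑ y : P, ∑ x : P, f.coeff x * χ (x * g⁻¹) y := by
            refine Finset.sum_congr rfl fun y _ => Finset.sum_congr rfl fun x _ => ?_
            rw [hχ_mul y x g⁻¹]
        _ = ∑ x : P, f.coeff x * ∑ y : P, χ (x * g⁻¹) y := by
            rw [Finset.sum_comm]
            exact Finset.sum_congr rfl fun x _ => by rw [Finset.mul_sum]
        _ = ∑ x : P, f.coeff x * (if x = g then (Fintype.card P : R) else 0) := by
            refine Finset.sum_congr rfl fun x _ => ?_
            congr 1
            by_cases hx : x = g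
            · rw [if_pos hx]; exact hsum_one _ (by rw [hx, mul_inv_cancel])
            · rw [if_neg hx]; exact hsum_ne _ (by
                intro h; exact hx (by rwa [mul_inv_eq_one] at h))
        _ = f.coeff g * (Fintype.card P : R) := by
            rw [Finset.sum_congr rfl (fun x _ => mul_ite (x = g) (f.coeff x)
              ((Fintype.card P : R)) (0:R))]
            simp only [mul_zero]
            rw [Finset.sum_ite_eq' Finset.univ g (fun x => f.coeff x * (Fintype.card P : R))]
            rw [if_pos (Finset.mem_univ g)]
    have h2 : ∑ y : P, Φ f y * χ g⁻¹ y = 0 := by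
      refine Finset.sum_eq_zero fun y _ => ?_
      rw [hf]; exact zero_mul _
    rw [h2] at h1
    have := hcardu.mul_left_eq_zero.mp h1.symm
    simpa using this
  -- bijectivity by finiteness
  have hbij : Function.Bijective Φ := by
    have e : MonoidAlgebra R P ≃ (P → R) :=
      MonoidAlgebra.coeffEquiv.trans Finsupp.equivFunOnFinite
    have hinj' : Function.Injective (Φ ∘ e.symm) := hinj.comp e.symm.injective
    have hbij' := (Finite.injective_iff_bijective).mp hinj'
    have : Φ = (Φ ∘ e.symm) ∘ e := by funext f; simp
    rw [this]
    exact hbij'.comp e.bijective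
  exact ⟨RingEquiv.ofBijective Φ hbij⟩


private def piCongrRingEquiv {G P R : Type*} [NonUnitalNonAssocSemiring R] (e : G ≃ P) :
    (P → R) ≃+* (G → R) where
  toFun F := F ∘ e
  invFun F := F ∘ e.symm
  left_inv F := by funext x; simp
  right_inv F := by funext x; simp
  map_mul' F F' := rfl
  map_add' F F' := rfl

private lemma backward (R : Type*) [CommRing R] [IsLocalRing R] [Fintype R]
    (G : Type*) [CommGroup G] [Fintype G]
    (ξ : R) (hord : orderOf ξ = Monoid.exponent G)
    (hmu : IsUnit ((Monoid.exponent G : ℕ) : R)) :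
    Nonempty (MonoidAlgebra R G ≃+* (G → R)) := by
  classical
  obtain ⟨ι, hι, n, hn1, ⟨e⟩⟩ := CommGroup.equiv_prod_multiplicative_zmod_of_finite G
  haveI := hι
  haveI : ∀ i, NeZero (n i) := fun i => ⟨by have := hn1 i; omega⟩
  have hm0 : Monoid.exponent G ≠ 0 := Monoid.exponent_ne_zero_of_finite
  have hdvd : ∀ i, n i ∣ Monoid.exponent G := by
    intro i
    have h1 : orderOf (e.symm (Pi.mulSingle i (Multiplicative.ofAdd (1 : ZMod (n i))))) = n i := by
      rw [MulEquiv.orderOf_eq, orderOf_piMulSingle, orderOf_ofAdd_eq_addOrderOf,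
        ZMod.addOrderOf_one]
    exact h1 ▸ Monoid.order_dvd_exponent _
  have hζ : ∀ i, orderOf (ξ ^ (Monoid.exponent G / n i)) = n i := by
    intro i
    have hle : n i ≤ Monoid.exponent G := Nat.le_of_dvd (Nat.pos_of_ne_zero hm0) (hdvd i)
    have hne0 : Monoid.exponent G / n i ≠ 0 :=
      Nat.div_ne_zero_iff.mpr ⟨by have := hn1 i; omega, hle⟩
    rw [orderOf_pow' ξ hne0, hord, Nat.gcd_eq_right (Nat.div_dvd_of_dvd (hdvd i)),
      Nat.div_div_self (hdvd i) hm0]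
  have hu : ∀ i, IsUnit ((n i : ℕ) : R) := by
    intro i
    obtain ⟨c, hc⟩ := hdvd i
    rw [hc, Nat.cast_mul] at hmu
    exact isUnit_of_mul_isUnit_left hmu
  obtain ⟨E⟩ := backward_aux R ι n (fun i => by have := hn1 i; omega)
    (fun i => ξ ^ (Monoid.exponent G / n i)) hζ hu
  exact ⟨((MonoidAlgebra.domCongr R R e).toRingEquiv.trans E).trans
    (piCongrRingEquiv e.toEquiv)⟩


private lemma forward_root (R : Type*) [CommRing R] [IsLocalRing R] [Fintype R]
    (G : Type*) [CommGroup G] [Fintype G] (Ψ : MonoidAlgebra R G ≃+* (G → R)) :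
    ∃ ξ : R, orderOf ξ = Monoid.exponent G := by
  classical
  have hm0 : Monoid.exponent G ≠ 0 := Monoid.exponent_ne_zero_of_finite
  set hom : G →* (G → R) :=
    (Ψ : MonoidAlgebra R G →+* (G → R)).toMonoidHom.comp (MonoidAlgebra.of R G) with hhom
  have hinj : Function.Injective hom :=
    Ψ.injective.comp MonoidAlgebra.of_injective
  obtain ⟨g, hg⟩ := Monoid.exists_orderOf_eq_exponent (Monoid.ExponentExists.of_finite (G := G))
  set x : G → R := hom g with hx
  have hordx : orderOf x = Monoid.exponent G := by
    rw [hx, orderOf_injective hom hinj g, hg]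
  have hxm : x ^ Monoid.exponent G = 1 := by
    rw [hx, ← map_pow, Monoid.pow_exponent_eq_one g, map_one]
  have hxiu : ∀ i : G, IsUnit (x i) := by
    intro i
    refine IsUnit.of_mul_eq_one ((x i) ^ (Monoid.exponent G - 1)) ?_
    have : x i * (x i) ^ (Monoid.exponent G - 1) = (x i) ^ (Monoid.exponent G) := by
      rw [← pow_succ']
      congr 1
      omega
    rw [this]
    exact congrFun hxm i
  set E := Monoid.exponent Rˣ with hE
  have hE0 : E ≠ 0 := Monoid.exponent_ne_zero_of_finite
  have hxE : x ^ E = 1 := by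
    funext i
    show (x i) ^ E = 1
    have h2 : (((hxiu i).unit ^ E : Rˣ) : R) = (x i) ^ E := by
      rw [Units.val_pow_eq_pow_val, (hxiu i).unit_spec]
    rw [← h2, Monoid.pow_exponent_eq_one, Units.val_one]
  have hmE : Monoid.exponent G ∣ E := by
    rw [← hordx]
    exact orderOf_dvd_of_pow_eq_one hxE
  obtain ⟨w, hw⟩ := Monoid.exists_orderOf_eq_exponent (Monoid.ExponentExists.of_finite (G := Rˣ))
  have hle : Monoid.exponent G ≤ E := Nat.le_of_dvd (Nat.pos_of_ne_zero hE0) hmE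
  have hne0 : E / Monoid.exponent G ≠ 0 :=
    Nat.div_ne_zero_iff.mpr ⟨hm0, hle⟩
  refine ⟨((w ^ (E / Monoid.exponent G) : Rˣ) : R), ?_⟩
  rw [orderOf_units, orderOf_pow' w hne0, hw, ← hE,
    Nat.gcd_eq_right (Nat.div_dvd_of_dvd hmE), Nat.div_div_self hmE hE0]

private lemma forward_unit (R : Type*) [CommRing R] [IsLocalRing R] [Fintype R]
    (G : Type*) [CommGroup G] [Fintype G] (Ψ : MonoidAlgebra R G ≃+* (G → R)) :
    IsUnit ((Monoid.exponent G : ℕ) : R) := by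
  classical
  by_contra hmu
  set k := IsLocalRing.ResidueField R with hk
  haveI : Finite k := Finite.of_surjective (IsLocalRing.residue R) Ideal.Quotient.mk_surjective
  set p := ringChar k with hp
  haveI hfact : Fact p.Prime := ⟨CharP.char_is_prime k p⟩
  have hpm : p ∣ Monoid.exponent G := by
    have h0 : IsLocalRing.residue R ((Monoid.exponent G : ℕ) : R) = 0 := by
      by_contra h
      exact hmu ((IsLocalRing.residue_ne_zero_iff_isUnit _).mp h)
    rw [map_natCast] at h0
    exact (CharP.cast_eq_zero_iff k p _).mp h0
  have hpn : p ∣ Fintype.card G := hpm.trans Group.exponent_dvd_card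
  obtain ⟨g₀, hg₀⟩ := exists_prime_orderOf_dvd_card p hpn
  have hg₀ne : g₀ ≠ 1 := by
    intro h
    rw [h, orderOf_one] at hg₀
    exact hfact.out.one_lt.ne' hg₀.symm
  -- p is nilpotent in R
  have hpR : IsNilpotent ((p : ℕ) : R) := by
    have hmem : ((p : ℕ) : R) ∈ IsLocalRing.maximalIdeal R := by
      rw [← IsLocalRing.ker_residue, RingHom.mem_ker, map_natCast]
      exact CharP.cast_eq_zero k p
    obtain ⟨N, hN⟩ := IsArtinianRing.isNilpotent_jacobson_bot (R := R)
    rw [IsLocalRing.jacobson_eq_maximalIdeal (⊥ : Ideal R) bot_ne_top] at hN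
    refine ⟨N, ?_⟩
    have := Ideal.pow_mem_pow hmem N
    rw [hN] at this
    simpa using this
  set A := MonoidAlgebra R G with hA
  set X : A := MonoidAlgebra.of R G g₀ - 1 with hX
  have hXnil : IsNilpotent X := by
    obtain ⟨r, hr⟩ :=
      (Commute.all (MonoidAlgebra.of R G g₀) (-1 : A)).exists_add_pow_prime_eq hfact.out
    have hg₀p : (MonoidAlgebra.of R G g₀ : A) ^ p = 1 := by
      rw [← map_pow, ← hg₀, pow_orderOf_eq_one, map_one]
    have hXeq : X = MonoidAlgebra.of R G g₀ + (-1) := by rw [hX, sub_eq_add_neg]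
    have hXp : ∃ s : A, X ^ p = ((p : ℕ) : A) * s := by
      rcases hfact.out.eq_two_or_odd' with h2 | hodd
      · refine ⟨1 + MonoidAlgebra.of R G g₀ * -1 * r, ?_⟩
        rw [hXeq, hr, hg₀p, h2]
        norm_num
        ring
      · refine ⟨MonoidAlgebra.of R G g₀ * -1 * r, ?_⟩
        rw [hXeq, hr, hg₀p, hodd.neg_one_pow]
        ring
    obtain ⟨s, hs⟩ := hXp
    have hpA : IsNilpotent ((p : ℕ) : A) := by
      obtain ⟨N, hN⟩ := hpR
      exact ⟨N, by rw [← map_natCast (algebraMap R A) p, ← map_pow, hN, map_zero]⟩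
    obtain ⟨t, ht⟩ := hpA
    exact ⟨p * t, by rw [pow_mul, hs, mul_pow, ht, zero_mul]⟩
  have hXg : X.coeff g₀ = 1 := by
    rw [hX]
    show (MonoidAlgebra.of R G g₀ - 1 : A).coeff g₀ = 1
    rw [MonoidAlgebra.coeff_sub, Finsupp.sub_apply]
    have h1 : (MonoidAlgebra.of R G g₀ : A).coeff g₀ = 1 := by
      show (Finsupp.single g₀ (1:R)) g₀ = 1
      exact Finsupp.single_eq_same
    have h2 : (1 : A).coeff g₀ = 0 := by
      rw [MonoidAlgebra.one_def, MonoidAlgebra.coeff_single]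
      exact Finsupp.single_eq_of_ne' (Ne.symm hg₀ne)
    rw [h1, h2, sub_zero]
  -- nilpotency transfer
  have hnil_iff : ∀ a : A, IsNilpotent a ↔ IsNilpotent (Ψ a) := by
    intro a
    constructor
    · intro h; exact h.map (Ψ : A →+* (G → R))
    · intro h
      have := h.map (Ψ.symm : (G → R) →+* A)
      simpa using this
  set NR := {r : R // IsNilpotent r} with hNR
  set F : (G → NR) → A := fun f => MonoidAlgebra.ofCoeff (Finsupp.equivFunOnFinite.symm (fun g => (f g).1)) with hF
  have hF_apply : ∀ f g, (F f).coeff g = (f g).1 := fun f g => rfl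
  have hFnil : ∀ f, IsNilpotent (F f) := by
    intro f
    have hsum_eq : F f = ∑ g : G, (MonoidAlgebra.single g ((f g).1) : A) := by
      ext g'
      rw [MonoidAlgebra.coeff_sum, Finsupp.finset_sum_apply]
      rw [Finset.sum_congr rfl (fun g _ => MonoidAlgebra.coeff_single_apply)]
      rw [Finset.sum_ite_eq' Finset.univ g' (fun g => ((f g).1))]
      rw [if_pos (Finset.mem_univ g')]
      exact (hF_apply f g').symm
    have hmem : (∑ g : G, (MonoidAlgebra.single g ((f g).1) : A)) ∈ nilradical A := by
      refine Ideal.sum_mem _ (fun g _ => mem_nilradical.mpr ?_)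
      obtain ⟨t, ht⟩ := (f g).2
      exact ⟨t, by rw [MonoidAlgebra.single_pow, ht]; simp⟩
    rw [← mem_nilradical, hsum_eq]
    exact hmem
  have hFinj : Function.Injective F := by
    intro f f' h
    funext g
    exact Subtype.ext (by rw [← hF_apply f g, ← hF_apply f' g, h])
  have hFX : ∀ f, F f ≠ X := by
    intro f h
    have h1 : (F f).coeff g₀ = X.coeff g₀ := by rw [h]
    rw [hF_apply, hXg] at h1
    have : IsNilpotent (1 : R) := h1 ▸ (f g₀).2
    obtain ⟨t, ht⟩ := this
    rw [one_pow] at ht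
    exact one_ne_zero ht
  have hPiNil : ∀ b : G → R, IsNilpotent b → ∀ g, IsNilpotent (b g) := by
    rintro b ⟨t, ht⟩ g
    exact ⟨t, congrFun ht g⟩
  set q : ((G → NR) ⊕ Unit) → {a : A // IsNilpotent a} :=
    Sum.elim (fun f => ⟨F f, hFnil f⟩) (fun _ => ⟨X, hXnil⟩) with hq
  have hqinj : Function.Injective q := by
    rintro (f | u) (f' | u') h
    · exact congrArg Sum.inl (hFinj (Subtype.ext_iff.mp h))
    · exact absurd (Subtype.ext_iff.mp h) (hFX f)
    · exact absurd (Subtype.ext_iff.mp h).symm (hFX f')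
    · cases u; cases u'; rfl
  set e2 : {a : A // IsNilpotent a} → (G → NR) := fun a g =>
    ⟨Ψ a.1 g, hPiNil (Ψ a.1) ((hnil_iff a.1).mp a.2) g⟩ with he2
  have he2inj : Function.Injective e2 := by
    intro a a' h
    apply Subtype.ext
    apply Ψ.injective
    funext g
    exact Subtype.ext_iff.mp (congrFun h g)
  have hcard := Nat.card_le_card_of_injective _ (he2inj.comp hqinj)
  rw [Nat.card_sum] at hcard
  simp only [Nat.card_unique] at hcard
  omega


theorem stmt_16 (R : Type*) [CommRing R] [IsLocalRing R] [Fintype R]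
    (G : Type*) [CommGroup G] [Fintype G] :
    Nonempty (MonoidAlgebra R G ≃+* (G → R)) ↔
      ((∃ ξ : R, ξ ^ Monoid.exponent G = 1 ∧
          ∀ k : ℕ, 0 < k → k < Monoid.exponent G → ξ ^ k ≠ 1) ∧
        IsUnit (Monoid.exponent G : R)) := by
  constructor
  · rintro ⟨Ψ⟩
    obtain ⟨ξ, hξ⟩ := forward_root R G Ψ
    refine ⟨⟨ξ, ?_, ?_⟩, forward_unit R G Ψ⟩
    · rw [← hξ]; exact pow_orderOf_eq_one ξ
    · intro kk hk1 hk2 h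
      have hd := orderOf_dvd_of_pow_eq_one h
      rw [hξ] at hd
      exact absurd (Nat.le_of_dvd hk1 hd) (not_le.mpr hk2)
  · rintro ⟨⟨ξ, h1, h2⟩, hu⟩
    have hm0 : 0 < Monoid.exponent G :=
      Nat.pos_of_ne_zero Monoid.exponent_ne_zero_of_finite
    have hord : orderOf ξ = Monoid.exponent G :=
      (orderOf_eq_iff hm0).mpr ⟨h1, fun kk hlt hpos => h2 kk hpos hlt⟩
    exact backward R G ξ hord hu
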